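/- The arithmetic function b₂, where b₂(n) is the number of primitive Dirichlet characters χ modulo n (with complex values) satisfying χ² = 1, is multiplicative, and its values on prime powers are: b₂(2) = 0, b₂(4) = 1, b₂(8) = 2, b₂(2^r) = 0 for all r ≥ 4, and for every odd prime p, b₂(p) = 1 and b₂(p^r) = 0 for all r ≥ 2. -/

import Mathlib

noncomputable def Tc (n : ℕ) : ℕ := Nat.card {x : ZMod n // x ^ 2 = 1}


lemma Tc_mul {m n : ℕ} (h : Nat.Coprime m n) : Tc (m * n) = Tc m * Tc n := by
  have e : ZMod (m * n) ≃+* ZMod m × ZMod n := ZMod.chineseRemainder h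
  have e1 : {x : ZMod (m*n) // x ^ 2 = 1} ≃ {y : ZMod m × ZMod n // y ^ 2 = 1} :=
    ⟨fun x => ⟨e x.1, by rw [← map_pow, x.2, map_one]⟩,
     fun y => ⟨e.symm y.1, by rw [← map_pow, y.2, map_one]⟩,
     fun x => by simp, fun y => by simp⟩
  have e2 : {y : ZMod m × ZMod n // y ^ 2 = 1} ≃
      {a : ZMod m // a ^ 2 = 1} × {b : ZMod n // b ^ 2 = 1} :=
    ⟨fun y => ⟨⟨y.1.1, congrArg Prod.fst y.2⟩, ⟨y.1.2, congrArg Prod.snd y.2⟩⟩,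
     fun z => ⟨(z.1.1, z.2.1), Prod.ext z.1.2 z.2.2⟩,
     fun y => by ext <;> rfl, fun z => by ext <;> rfl⟩
  rw [Tc, Tc, Tc, Nat.card_congr (e1.trans e2), Nat.card_prod]

lemma intPrime {p : ℕ} (hp : p.Prime) : Prime (p:ℤ) :=
  Int.prime_iff_natAbs_prime.mpr (by simpa using hp)

lemma helper {p : ℤ} (hp : Prime p) (m : ℕ) {a b : ℤ} (h : p ^ m ∣ a * b)
    (hab : ¬ (p ∣ a ∧ p ∣ b)) : p ^ m ∣ a ∨ p ^ m ∣ b := by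
  by_cases ha : p ∣ a
  · have hb : ¬ p ∣ b := fun hb => hab ⟨ha, hb⟩
    exact Or.inl (((hp.coprime_iff_not_dvd.mpr hb).pow_left).dvd_of_dvd_mul_right h)
  · exact Or.inr (((hp.coprime_iff_not_dvd.mpr ha).pow_left).dvd_of_dvd_mul_left h)

lemma sq_cast_dvd {m : ℕ} {y : ℤ} (h : (y : ZMod m) ^ 2 = 1) :
    (m : ℤ) ∣ (y - 1) * (y + 1) := by
  have : ((y ^ 2 - 1 : ℤ) : ZMod m) = 0 := by push_cast; rw [h]; ring
  rw [ZMod.intCast_zmod_eq_zero_iff_dvd] at this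
  convert this using 1; ring

lemma sq_eq_one_iff_odd {p : ℕ} (hp : p.Prime) (hp2 : p ≠ 2) {r : ℕ} (hr : 1 ≤ r)
    (x : ZMod (p ^ r)) : x ^ 2 = 1 ↔ x = 1 ∨ x = -1 := by
  constructor
  · intro h
    obtain ⟨y, rfl⟩ := ZMod.intCast_surjective x
    have hdvd : ((p:ℤ)) ^ r ∣ (y - 1) * (y + 1) := by
      have := sq_cast_dvd h; push_cast at this ⊢; exact this
    have hnot : ¬ ((p:ℤ) ∣ y - 1 ∧ (p:ℤ) ∣ y + 1) := by
      rintro ⟨h1, h2⟩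
      have h3 : (p:ℤ) ∣ 2 := by have := dvd_sub h2 h1; simpa using this
      have h4 : p ∣ 2 := by exact_mod_cast h3
      have := (Nat.prime_dvd_prime_iff_eq hp Nat.prime_two).mp h4
      exact hp2 this
    rcases helper (intPrime hp) r hdvd hnot with h' | h'
    · left
      have : ((y - 1 : ℤ) : ZMod (p ^ r)) = 0 := by
        rw [ZMod.intCast_zmod_eq_zero_iff_dvd]; exact_mod_cast h'
      push_cast at this
      linear_combination this
    · right
      have : ((y + 1 : ℤ) : ZMod (p ^ r)) = 0 := by
        rw [ZMod.intCast_zmod_eq_zero_iff_dvd]; exact_mod_cast h'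
      push_cast at this
      linear_combination this
  · rintro (rfl | rfl) <;> ring

lemma natCast_ne_zero_zmod {m N : ℕ} (h0 : 0 < N) (h1 : N < m) : (N : ZMod m) ≠ 0 := by
  have : NeZero m := ⟨by omega⟩
  rw [Ne, ZMod.natCast_eq_zero_iff]
  intro h
  exact absurd (Nat.le_of_dvd h0 h) (by omega)

lemma one_ne_neg_one {m : ℕ} (hm : 2 < m) : (1 : ZMod m) ≠ -1 := by
  intro h
  have : ((2 : ℕ) : ZMod m) = 0 := by push_cast; linear_combination h
  exact natCast_ne_zero_zmod (by norm_num) hm this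

lemma Tc_odd {p : ℕ} (hp : p.Prime) (hp2 : p ≠ 2) {r : ℕ} (hr : 1 ≤ r) :
    Tc (p ^ r) = 2 := by
  have hlt : 2 < p ^ r := by
    have : 3 ≤ p := by rcases hp.two_le.lt_or_eq with h | h; omega; omega
    calc 2 < 3 ^ 1 := by norm_num
    _ ≤ p ^ r := Nat.pow_le_pow_left this 1 |>.trans (Nat.pow_le_pow_right (by omega) hr)
  have hset : {x : ZMod (p ^ r) | x ^ 2 = 1} = {1, -1} := by
    ext x; simpa using sq_eq_one_iff_odd hp hp2 hr x
  have : Tc (p ^ r) = ({x : ZMod (p ^ r) | x ^ 2 = 1} : Set _).ncard := by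
    rw [Tc, ← Nat.card_coe_set_eq]; rfl
  rw [this, hset, Set.ncard_pair (one_ne_neg_one hlt)]

lemma sq_eq_one_iff_two {r : ℕ} (hr : 3 ≤ r) (x : ZMod (2 ^ r)) :
    x ^ 2 = 1 ↔ x = 1 ∨ x = -1 ∨ x = (2^(r-1) : ℕ) + 1 ∨ x = (2^(r-1) : ℕ) - 1 := by
  have e1 : (2:ℤ) ^ r = 2 * 2 ^ (r-1) := by rw [← pow_succ']; congr 1; omega
  have e2 : (2:ℤ) ^ (r-1) = 2 * 2 ^ (r-2) := by rw [← pow_succ']; congr 1; omega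
  have h2c : ((2:ℕ) : ZMod (2^r)) * ((2^(r-1) : ℕ) : ZMod (2^r)) = 0 := by
    rw [← Nat.cast_mul, ← pow_succ']
    have : 2 ^ (r - 1 + 1) = 2 ^ r := by congr 1; omega
    rw [this, ZMod.natCast_self]
  have hcc : ((2^(r-1) : ℕ) : ZMod (2^r)) * ((2^(r-1) : ℕ) : ZMod (2^r)) = 0 := by
    rw [← Nat.cast_mul, ← pow_add]
    have : 2 ^ (r - 1 + (r - 1)) = 2 ^ r * 2 ^ (r - 2) := by rw [← pow_add]; congr 1; omega
    rw [this, Nat.cast_mul, ZMod.natCast_self, zero_mul]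
  push_cast at h2c hcc
  constructor
  · intro h
    obtain ⟨y, rfl⟩ := ZMod.intCast_surjective x
    have hdvd : ((2:ℤ)) ^ r ∣ (y - 1) * (y + 1) := by
      have := sq_cast_dvd h; push_cast at this ⊢; exact this
    have hodd : ¬ (2:ℤ) ∣ y := by
      intro h2
      have h21 : (2:ℤ) ∣ (y-1)*(y+1) := dvd_trans (dvd_pow_self 2 (by omega : r ≠ 0)) hdvd
      rcases (Int.prime_two.dvd_mul.mp h21) with h' | h' <;> omega
    obtain ⟨k, rfl⟩ : ∃ k, y = 2*k+1 := ⟨y/2, by omega⟩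
    have hdvd2 : (2:ℤ) ^ (r-2) ∣ k * (k+1) := by
      have h4 : (4:ℤ) * 2 ^ (r-2) ∣ 4 * (k * (k+1)) := by
        convert hdvd using 1
        · rw [e1, e2]; ring
        · ring
      exact (mul_dvd_mul_iff_left (by norm_num : (4:ℤ) ≠ 0)).mp h4
    have hnot : ¬ ((2:ℤ) ∣ k ∧ (2:ℤ) ∣ k + 1) := by rintro ⟨h1, h2⟩; omega
    rcases helper Int.prime_two (r-2) hdvd2 hnot with h' | h'
    · obtain ⟨a, rfl⟩ := h'
      rcases Int.even_or_odd a with ⟨b, rfl⟩ | ⟨b, rfl⟩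
      · refine Or.inl ?_
        have hz : ((2*(2^(r-2)*(b+b))+1 - 1 : ℤ) : ZMod (2^r)) = 0 := by
          rw [ZMod.intCast_zmod_eq_zero_iff_dvd]
          refine ⟨b, ?_⟩; push_cast; rw [e1, e2]; ring
        push_cast at hz ⊢
        linear_combination hz
      · refine Or.inr (Or.inr (Or.inl ?_))
        have hz : ((2*(2^(r-2)*(2*b+1))+1 - (2^(r-1)+1) : ℤ) : ZMod (2^r)) = 0 := by
          rw [ZMod.intCast_zmod_eq_zero_iff_dvd]
          refine ⟨b, ?_⟩; push_cast; rw [e1, e2]; ring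
        push_cast at hz ⊢
        linear_combination hz
    · obtain ⟨a, ha⟩ := h'
      rcases Int.even_or_odd a with ⟨b, rfl⟩ | ⟨b, rfl⟩
      · refine Or.inr (Or.inl ?_)
        have hz : ((2*k+1 - (-1) : ℤ) : ZMod (2^r)) = 0 := by
          rw [ZMod.intCast_zmod_eq_zero_iff_dvd]
          refine ⟨b, ?_⟩; push_cast
          have : k = 2^(r-2)*(b+b) - 1 := by omega
          rw [this, e1, e2]; ring
        push_cast at hz ⊢
        linear_combination hz
      · refine Or.inr (Or.inr (Or.inr ?_))
        have hz : ((2*k+1 - (2^(r-1)-1) : ℤ) : ZMod (2^r)) = 0 := by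
          rw [ZMod.intCast_zmod_eq_zero_iff_dvd]
          refine ⟨b, ?_⟩; push_cast
          have : k = 2^(r-2)*(2*b+1) - 1 := by omega
          rw [this, e1, e2]; ring
        push_cast at hz ⊢
        linear_combination hz
  · rintro (rfl | rfl | rfl | rfl) <;> push_cast
    · ring
    · ring
    · linear_combination hcc + h2c
    · linear_combination hcc - h2c

lemma Tc_two_pow {r : ℕ} (hr : 3 ≤ r) : Tc (2 ^ r) = 4 := by
  have hlt : 2 ^ (r-1) < 2 ^ r := Nat.pow_lt_pow_right (by norm_num) (by omega)
  have hge : 4 ≤ 2 ^ (r-1) := by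
    calc 4 = 2^2 := by norm_num
    _ ≤ 2 ^ (r-1) := Nat.pow_le_pow_right (by norm_num) (by omega)
  have hsum : 2 ^ (r-1) + 2 < 2 ^ r := by
    have : 2 ^ r = 2 * 2 ^ (r-1) := by rw [← pow_succ']; congr 1; omega
    omega
  set m := 2 ^ r with hm
  set c : ZMod m := ((2^(r-1) : ℕ) : ZMod m) with hc
  have key : ∀ N : ℕ, 0 < N → N < m → (N : ZMod m) ≠ 0 := fun N h1 h2 => natCast_ne_zero_zmod h1 h2
  have h2ne : (2 : ZMod m) ≠ 0 := by
    have := key 2 (by norm_num) (by omega)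
    rwa [Nat.cast_ofNat] at this
  have hcne : c ≠ 0 := key _ (by omega) hlt
  have hcne2 : c ≠ 2 := by
    intro h
    have : ((2^(r-1) - 2 : ℕ) : ZMod m) = 0 := by
      rw [Nat.cast_sub (by omega), ← hc, h, Nat.cast_ofNat, sub_self]
    exact key _ (by omega) (by omega) this
  have hcne2' : c + 2 ≠ 0 := by
    intro h
    have : ((2^(r-1) + 2 : ℕ) : ZMod m) = 0 := by
      rw [Nat.cast_add, ← hc, Nat.cast_ofNat]; exact h
    exact key _ (by omega) (by omega) this
  have h1m : 1 ≠ (-1 : ZMod m) := one_ne_neg_one (by omega)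
  have hset : {x : ZMod m | x ^ 2 = 1} = {1, -1, c + 1, c - 1} := by
    ext x
    simp only [Set.mem_setOf_eq, Set.mem_insert_iff, Set.mem_singleton_iff]
    exact sq_eq_one_iff_two hr x
  have hTc : Tc m = ({x : ZMod m | x ^ 2 = 1} : Set _).ncard := by
    rw [Tc, ← Nat.card_coe_set_eq]; rfl
  have : NeZero m := ⟨by positivity⟩
  rw [hTc, hset]
  have d1 : (1 : ZMod m) ∉ ({-1, c+1, c-1} : Set (ZMod m)) := by
    simp only [Set.mem_insert_iff, Set.mem_singleton_iff]
    push_neg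
    refine ⟨h1m, fun h => hcne (by linear_combination -h), fun h => hcne2 (by linear_combination -h)⟩
  have d2 : (-1 : ZMod m) ∉ ({c+1, c-1} : Set (ZMod m)) := by
    simp only [Set.mem_insert_iff, Set.mem_singleton_iff]
    push_neg
    exact ⟨fun h => hcne2' (by linear_combination -h), fun h => hcne (by linear_combination -h)⟩
  have d3 : (c + 1 : ZMod m) ∉ ({c-1} : Set (ZMod m)) := by
    simp only [Set.mem_singleton_iff]
    exact fun h => h2ne (by linear_combination h)
  rw [Set.ncard_insert_of_notMem d1, Set.ncard_insert_of_notMem d2,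
    Set.ncard_insert_of_notMem d3, Set.ncard_singleton]

noncomputable def Qd (n : ℕ) : ℕ := Nat.card {χ : DirichletCharacter ℂ n // χ ^ 2 = 1}

def units_sq_equiv (n : ℕ) : {u : (ZMod n)ˣ // u ^ 2 = 1} ≃ {x : ZMod n // x ^ 2 = 1} where
  toFun u := ⟨(u.1 : ZMod n), by rw [← Units.val_pow_eq_pow_val, u.2, Units.val_one]⟩
  invFun x := ⟨⟨x.1, x.1, by rw [← sq]; exact x.2, by rw [← sq]; exact x.2⟩,
    by ext; rw [Units.val_pow_eq_pow_val]; exact x.2⟩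
  left_inv u := by ext; rfl
  right_inv x := by ext; rfl

lemma Qd_eq_Tc {n : ℕ} (hn : n ≠ 0) : Qd n = Tc n := by
  have : NeZero n := ⟨hn⟩
  have : NeZero (Monoid.exponent (ZMod n)ˣ) := ⟨Monoid.exponent_ne_zero_of_finite⟩
  obtain ⟨e⟩ := MulChar.mulEquiv_units (ZMod n) ℂ
  have e1 : {χ : DirichletCharacter ℂ n // χ ^ 2 = 1} ≃ {u : (ZMod n)ˣ // u ^ 2 = 1} :=
    Equiv.subtypeEquiv e.toEquiv (fun χ => by
      rw [MulEquiv.toEquiv_eq_coe, EquivLike.coe_coe, ← map_pow]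
      exact (MulEquiv.map_eq_one_iff e).symm)
  rw [Qd, Tc, Nat.card_congr (e1.trans (units_sq_equiv n))]

open DirichletCharacter

lemma unitsMap_val {n d : ℕ} [NeZero n] (h : d ∣ n) (u : (ZMod n)ˣ) :
    ((ZMod.unitsMap h u : (ZMod d)ˣ) : ZMod d) = (((u : ZMod n).val : ℕ) : ZMod d) := by
  rw [ZMod.unitsMap_def]
  simp [ZMod.natCast_val]

lemma factorsThrough_gcd {R : Type*} [CommMonoidWithZero R] {n : ℕ} [NeZero n]
    {χ : DirichletCharacter R n} {d₁ d₂ : ℕ}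
    (h1 : χ.FactorsThrough d₁) (h2 : χ.FactorsThrough d₂) :
    χ.FactorsThrough (Nat.gcd d₁ d₂) := by
  have hd1 : d₁ ∣ n := h1.dvd
  have hd2 : d₂ ∣ n := h2.dvd
  have hg : Nat.gcd d₁ d₂ ∣ n := (Nat.gcd_dvd_left d₁ d₂).trans hd1
  have hL : Nat.lcm d₁ d₂ ∣ n := Nat.lcm_dvd hd1 hd2
  rw [factorsThrough_iff_ker_unitsMap hg]
  rw [factorsThrough_iff_ker_unitsMap hd1] at h1
  rw [factorsThrough_iff_ker_unitsMap hd2] at h2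
  intro u hu
  set a := (u : ZMod n).val with ha
  have hacop : a.Coprime n := ZMod.val_coe_unit_coprime u
  have hmod : a ≡ 1 [MOD Nat.gcd d₁ d₂] := by
    have h' : ((a : ℕ) : ZMod (Nat.gcd d₁ d₂)) = ((1 : ℕ) : ZMod (Nat.gcd d₁ d₂)) := by
      rw [← unitsMap_val hg u, MonoidHom.mem_ker.mp hu]
      simp
    exact (ZMod.natCast_eq_natCast_iff _ _ _).mp h'
  obtain ⟨b, hb1, hb2⟩ := Nat.chineseRemainder' hmod
  have hbcop : b.Coprime (Nat.lcm d₁ d₂) := by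
    have c1 : b.Coprime d₁ := by
      rw [← ZMod.isUnit_iff_coprime, (ZMod.natCast_eq_natCast_iff _ _ _).mpr hb1,
        ZMod.isUnit_iff_coprime]
      exact hacop.coprime_dvd_right hd1
    have c2 : b.Coprime d₂ := by
      rw [← ZMod.isUnit_iff_coprime, (ZMod.natCast_eq_natCast_iff _ _ _).mpr hb2]
      simp
    exact Nat.Coprime.coprime_dvd_right (Nat.lcm_dvd_mul d₁ d₂) (c1.mul_right c2)
  obtain ⟨v, hv⟩ := ZMod.unitsMap_surjective hL (ZMod.unitOfCoprime b hbcop)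
  have hvb : (v : ZMod n).val ≡ b [MOD Nat.lcm d₁ d₂] := by
    apply (ZMod.natCast_eq_natCast_iff _ _ _).mp
    rw [← unitsMap_val hL v, hv, ZMod.coe_unitOfCoprime]
  have hone : ∀ d : ℕ, ((1:ℕ) : ZMod d) = 1 := fun d => Nat.cast_one
  have hv2 : ZMod.unitsMap hd2 v = 1 := by
    ext
    rw [unitsMap_val hd2 v, Units.val_one, ← hone d₂]
    exact (ZMod.natCast_eq_natCast_iff _ _ _).mpr
      ((hvb.of_dvd (Nat.dvd_lcm_right d₁ d₂)).trans hb2)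
  have hv1 : ZMod.unitsMap hd1 (u⁻¹ * v) = 1 := by
    have hvv : ZMod.unitsMap hd1 v = ZMod.unitsMap hd1 u := by
      ext
      rw [unitsMap_val hd1 v, unitsMap_val hd1 u]
      exact (ZMod.natCast_eq_natCast_iff _ _ _).mpr
        ((hvb.of_dvd (Nat.dvd_lcm_left d₁ d₂)).trans hb1)
    rw [map_mul, hvv, map_inv, inv_mul_cancel]
  have e1 : χ.toUnitHom (u⁻¹ * v) = 1 := h1 hv1
  have e2 : χ.toUnitHom v = 1 := h2 hv2
  rw [MonoidHom.mem_ker]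
  have hfin : χ.toUnitHom u = χ.toUnitHom v := by
    calc χ.toUnitHom u = χ.toUnitHom u * χ.toUnitHom (u⁻¹ * v) := by rw [e1, mul_one]
    _ = χ.toUnitHom v := by rw [← map_mul]; congr 1; group
  rw [hfin, e2]

lemma conductor_changeLevel {R : Type*} [CommMonoidWithZero R] {d n : ℕ} [NeZero n] (h : d ∣ n)
    {χ : DirichletCharacter R d} (hχ : χ.IsPrimitive) :
    (changeLevel h χ).conductor = d := by
  set ψ := changeLevel h χ with hψ
  have hmem : ψ.FactorsThrough d := ⟨h, χ, rfl⟩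
  have hle : ψ.conductor ≤ d := Nat.sInf_le hmem
  have hg : ψ.FactorsThrough (Nat.gcd ψ.conductor d) :=
    factorsThrough_gcd (factorsThrough_conductor ψ) hmem
  obtain ⟨hgn, θ, hθ⟩ := hg
  have hgd' : Nat.gcd ψ.conductor d ∣ d := Nat.gcd_dvd_right _ _
  have hsplit : changeLevel h χ = changeLevel h (changeLevel hgd' θ) := by
    rw [← changeLevel_trans θ hgd' h]
    exact hθ
  have hχθ : χ = changeLevel hgd' θ := changeLevel_injective h hsplit
  have hdle : d ≤ Nat.gcd ψ.conductor d := by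
    have : χ.conductor ≤ Nat.gcd ψ.conductor d := Nat.sInf_le ⟨hgd', θ, hχθ⟩
    rwa [hχ] at this
  have hpos : 0 < ψ.conductor := Nat.pos_of_ne_zero (conductor_ne_zero ψ)
  have := Nat.le_of_dvd hpos (Nat.gcd_dvd_left ψ.conductor d)
  omega

/-- `b₂ n` is the number of primitive Dirichlet characters `χ` modulo `n` with values in `ℂ`
satisfying `χ ^ 2 = 1`. -/
noncomputable def b₂ (n : ℕ) : ℕ :=
  Nat.card {χ : DirichletCharacter ℂ n // χ.IsPrimitive ∧ χ ^ 2 = 1}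

noncomputable def level_equiv {n d : ℕ} [NeZero n] (h : d ∣ n) :
    {χ₀ : DirichletCharacter ℂ d // χ₀.IsPrimitive ∧ χ₀ ^ 2 = 1} ≃
      {χ : DirichletCharacter ℂ n // χ ^ 2 = 1 ∧ χ.conductor = d} := by
  have hd0 : d ≠ 0 := fun h0 => NeZero.ne n (Nat.eq_zero_of_zero_dvd (h0 ▸ h))
  refine Equiv.ofBijective
    (fun χ₀ => ⟨changeLevel h χ₀.1, by rw [← map_pow, χ₀.2.2, map_one], conductor_changeLevel h χ₀.2.1⟩) ⟨?_, ?_⟩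
  · intro x y hxy
    exact Subtype.ext (changeLevel_injective h (congrArg Subtype.val hxy))
  · rintro ⟨χ, hsq, hcond⟩
    have hft : χ.FactorsThrough d := hcond ▸ factorsThrough_conductor χ
    obtain ⟨hdvd, χ₀, hchi⟩ := hft
    have hsq0 : χ₀ ^ 2 = 1 := by
      apply changeLevel_injective hdvd
      rw [map_pow, ← hchi, hsq, map_one]
    have hprim : χ₀.IsPrimitive := by
      have h1 : χ₀.conductor ∣ d := conductor_dvd_level χ₀
      obtain ⟨hdd, θ, hθ⟩ := factorsThrough_conductor χ₀
      have h2 : χ.FactorsThrough χ₀.conductor := by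
        refine ⟨hdd.trans hdvd, θ, ?_⟩
        rw [changeLevel_trans θ hdd hdvd, hchi]
        exact congrArg _ hθ
      have h3 : χ.conductor ≤ χ₀.conductor := Nat.sInf_le h2
      have h4 : χ₀.conductor ≤ d := Nat.le_of_dvd (Nat.pos_of_ne_zero hd0) h1
      rw [IsPrimitive]
      omega
    refine ⟨⟨χ₀, hprim, hsq0⟩, ?_⟩
    exact Subtype.ext (by simpa using hchi.symm)

lemma Qd_eq_sum {n : ℕ} (hn : n ≠ 0) : Qd n = ∑ d ∈ n.divisors, b₂ d := by
  classical
  have : NeZero n := ⟨hn⟩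
  rw [Qd, Nat.card_eq_fintype_card, Fintype.card_subtype]
  rw [Finset.card_eq_sum_card_fiberwise
    (f := fun χ : DirichletCharacter ℂ n => χ.conductor) (t := n.divisors)
    (fun χ _ => Nat.mem_divisors.mpr ⟨conductor_dvd_level χ, hn⟩)]
  refine Finset.sum_congr rfl fun d hd => ?_
  rw [Finset.filter_filter]
  have : Fintype.card {χ : DirichletCharacter ℂ n // χ ^ 2 = 1 ∧ χ.conductor = d}
      = (Finset.univ.filter fun χ : DirichletCharacter ℂ n => χ ^ 2 = 1 ∧ χ.conductor = d).card :=
    Fintype.card_subtype _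
  rw [← this, b₂, Nat.card_eq_fintype_card,
    Fintype.card_congr (level_equiv (Nat.mem_divisors.mp hd).1)]

open ArithmeticFunction ArithmeticFunction.zeta ArithmeticFunction.Moebius in
lemma b₂_mult {m n : ℕ} (hm : m ≠ 0) (hn : n ≠ 0) (h : Nat.Coprime m n) :
    b₂ (m * n) = b₂ m * b₂ n := by
  classical
  set F : ArithmeticFunction ℤ := ⟨fun k => if k = 0 then 0 else (b₂ k : ℤ), by simp⟩ with hF
  set G : ArithmeticFunction ℤ := ⟨fun k => if k = 0 then 0 else (Tc k : ℤ), by simp⟩ with hG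
  have hFapp : ∀ k, F k = if k = 0 then 0 else (b₂ k : ℤ) := fun k => rfl
  have hGapp : ∀ k, G k = if k = 0 then 0 else (Tc k : ℤ) := fun k => rfl
  have hT1 : Tc 1 = 1 := by rw [Tc, Nat.card_eq_fintype_card]; decide
  have hGF : G = F * (ζ : ArithmeticFunction ℤ) := by
    ext k
    rcases eq_or_ne k 0 with rfl | hk
    · simp
    · rw [coe_mul_zeta_apply, hGapp, if_neg hk]
      have : ∑ d ∈ k.divisors, F d = ∑ d ∈ k.divisors, (b₂ d : ℤ) := by
        refine Finset.sum_congr rfl fun d hd => ?_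
        rw [hFapp, if_neg (Nat.pos_of_mem_divisors hd).ne']
      rw [this, ← Nat.cast_sum, ← Qd_eq_sum hk, Qd_eq_Tc hk]
  have hGmult : G.IsMultiplicative := by
    constructor
    · rw [hGapp, if_neg one_ne_zero, hT1, Nat.cast_one]
    · intro a b hab
      rcases eq_or_ne a 0 with rfl | ha
      · have : b = 1 := by simpa [Nat.coprime_zero_left] using hab
        subst this
        simp [hGapp, hT1]
      rcases eq_or_ne b 0 with rfl | hb
      · have : a = 1 := by simpa [Nat.coprime_zero_right] using hab
        subst this
        simp [hGapp, hT1]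
      rw [hGapp, hGapp, hGapp, if_neg (Nat.mul_ne_zero ha hb), if_neg ha, if_neg hb,
        Tc_mul hab]
      push_cast
      ring
  have hFG : F = G * (μ : ArithmeticFunction ℤ) := by
    rw [hGF, mul_assoc, coe_zeta_mul_moebius, mul_one]
  have hFmult : F.IsMultiplicative := by
    rw [hFG]
    exact hGmult.mul isMultiplicative_moebius
  have := hFmult.2 h
  rw [hFapp, hFapp, hFapp, if_neg (Nat.mul_ne_zero hm hn), if_neg hm, if_neg hn] at this
  exact_mod_cast this

lemma Qd_succ {p : ℕ} (hp : p.Prime) (r : ℕ) : Qd (p ^ (r + 1)) = Qd (p ^ r) + b₂ (p ^ (r + 1)) := by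
  have hp0 : p ≠ 0 := hp.pos.ne'
  rw [Qd_eq_sum (pow_ne_zero _ hp0), Qd_eq_sum (pow_ne_zero _ hp0),
    Nat.sum_divisors_prime_pow hp, Nat.sum_divisors_prime_pow hp, Finset.sum_range_succ]

theorem b₂_multiplicative_and_values :
    b₂ 1 = 1 ∧
    (∀ m n : ℕ, Nat.Coprime m n → b₂ (m * n) = b₂ m * b₂ n) ∧
    b₂ 2 = 0 ∧
    b₂ 4 = 1 ∧
    b₂ 8 = 2 ∧
    (∀ r : ℕ, 4 ≤ r → b₂ (2 ^ r) = 0) ∧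
    (∀ p : ℕ, p.Prime → p ≠ 2 →
      b₂ p = 1 ∧ (∀ r : ℕ, 2 ≤ r → b₂ (p ^ r) = 0)) := by
  have hT1 : Tc 1 = 1 := by rw [Tc, Nat.card_eq_fintype_card]; decide
  have hT2 : Tc 2 = 1 := by rw [Tc, Nat.card_eq_fintype_card]; decide
  have hT4 : Tc 4 = 2 := by rw [Tc, Nat.card_eq_fintype_card]; decide
  have hT8 : Tc 8 = 4 := by rw [Tc, Nat.card_eq_fintype_card]; decide
  have hb1 : b₂ 1 = 1 := by
    have h := Qd_eq_sum one_ne_zero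
    rw [Nat.divisors_one, Finset.sum_singleton, Qd_eq_Tc one_ne_zero, hT1] at h
    omega
  have key : ∀ (p : ℕ), p.Prime → ∀ r : ℕ, Tc (p ^ (r + 1)) = Tc (p ^ r) + b₂ (p ^ (r + 1)) := by
    intro p hp r
    have h := Qd_succ hp r
    rwa [Qd_eq_Tc (pow_ne_zero _ hp.pos.ne'), Qd_eq_Tc (pow_ne_zero _ hp.pos.ne')] at h
  have hb2 : b₂ 2 = 0 := by
    have h := key 2 Nat.prime_two 0
    norm_num [hT1, hT2] at h
    omega
  have hb4 : b₂ 4 = 1 := by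
    have h := key 2 Nat.prime_two 1
    norm_num [hT2, hT4] at h
    omega
  have hb8 : b₂ 8 = 2 := by
    have h := key 2 Nat.prime_two 2
    norm_num [hT4, hT8] at h
    omega
  refine ⟨hb1, ?_, hb2, hb4, hb8, ?_, ?_⟩
  · intro m n h
    rcases eq_or_ne m 0 with rfl | hm
    · have : n = 1 := by simpa [Nat.coprime_zero_left] using h
      subst this
      simp [hb1]
    rcases eq_or_ne n 0 with rfl | hn
    · have : m = 1 := by simpa [Nat.coprime_zero_right] using h
      subst this
      simp [hb1]
    exact b₂_mult hm hn h
  · intro r hr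
    obtain ⟨s, rfl⟩ : ∃ s, r = s + 1 := ⟨r - 1, by omega⟩
    have h := key 2 Nat.prime_two s
    rw [Tc_two_pow (by omega), Tc_two_pow (by omega)] at h
    omega
  · intro p hp hp2
    have hTp : Tc p = 2 := by
      have := Tc_odd hp hp2 le_rfl
      rwa [pow_one] at this
    constructor
    · have h := key p hp 0
      norm_num [hT1, hTp] at h
      omega
    · intro r hr
      obtain ⟨s, rfl⟩ : ∃ s, r = s + 1 := ⟨r - 1, by omega⟩
      have h := key p hp s
      rw [Tc_odd hp hp2 (by omega), Tc_odd hp hp2 (by omega)] at h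
      omega
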